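/- For any graph G, for any optimal HC tree T* of G and any partition {P_i}_{i=1}^{ℓ} of the vertex set, OPT_G ≥ Σ_{i=1}^{ℓ} OPT_{G[P_i]}, where OPT_{G[P_i]} is the minimum Dasgupta cost of an HC tree of the induced subgraph G[P_i]. -/
import Mathlib


open Finset

/-- A hierarchical clustering (HC) tree: a binary tree with vertex-labelled leaves. -/
inductive HCTree (V : Type) where
  | leaf (v : V) : HCTree V
  | node (l r : HCTree V) : HCTree V

namespace HCTree

variable {V : Type} [Fintype V] [DecidableEq V]

/-- The list of leaf labels of an HC tree. -/
def leafList : HCTree V → List V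
  | leaf v => [v]
  | node l r => leafList l ++ leafList r

/-- The set of leaves of an HC tree. -/
def leaves (t : HCTree V) : Finset V := t.leafList.toFinset

/-- Total weight of (ordered) pairs between two vertex sets:
`w(S,T) = ∑_{u ∈ S, v ∈ T} w(u,v)`. -/
def cut (w : V → V → ℝ) (S T : Finset V) : ℝ := ∑ u ∈ S, ∑ v ∈ T, w u v

/-- The (weighted) degree of a vertex: `d_u = ∑_v w(u,v)`. -/
def deg (w : V → V → ℝ) (u : V) : ℝ := ∑ v, w u v

/-- The volume of a vertex set: `vol(S) = ∑_{u ∈ S} d_u`. -/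
def vol (w : V → V → ℝ) (S : Finset V) : ℝ := ∑ u ∈ S, deg w u

/-- Dasgupta's cost of an HC tree, via the equivalent internal-node formula:
`cost(T) = ∑_{N → (N₁,N₂)} |leaves(T[N])| · w(leaves(N₁), leaves(N₂))`. -/
def cost (w : V → V → ℝ) : HCTree V → ℝ
  | leaf _ => 0
  | node l r =>
      ((leaves (node l r)).card : ℝ) * cut w (leaves l) (leaves r)
        + cost w l + cost w r

/-- `t` is an HC tree of the graph on vertex set `V`: its leaves are distinct
and are exactly the vertices of `V`. -/
def isHC (t : HCTree V) : Prop := t.leafList.Nodup ∧ t.leaves = Finset.univ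

end HCTree

namespace HCTree

variable {V : Type} [Fintype V] [DecidableEq V]

/-- The weight function of the induced subgraph `G[P]`. -/
def inducedW (w : V → V → ℝ) (P : Finset V) : V → V → ℝ :=
  fun u v => if u ∈ P ∧ v ∈ P then w u v else 0

/-- `t` is an HC tree of the induced subgraph `G[P]`: its leaves are distinct and are
exactly the vertices of `P`. -/
def isHCon (t : HCTree V) (P : Finset V) : Prop :=
  t.leafList.Nodup ∧ t.leaves = P

end HCTree

namespace HCTree

variable {V : Type} [Fintype V] [DecidableEq V]

/-- Restriction of an HC tree to the leaves in `P` (possibly empty). -/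
def restrict (P : Finset V) : HCTree V → Option (HCTree V)
  | leaf v => if v ∈ P then some (leaf v) else none
  | node l r =>
    match restrict P l, restrict P r with
    | none, none => none
    | some l', none => some l'
    | none, some r' => some r'
    | some l', some r' => some (node l' r')

def oLeafList : Option (HCTree V) → List V
  | none => []
  | some t => t.leafList

def oCost (w : V → V → ℝ) : Option (HCTree V) → ℝ
  | none => 0
  | some t => cost w t

lemma restrict_leafList (P : Finset V) (t : HCTree V) :
    oLeafList (restrict P t) = t.leafList.filter (· ∈ P) := by
  induction t with
  | leaf v =>
      simp only [restrict, leafList]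
      split <;> simp_all [oLeafList, leafList]
  | node l r ihl ihr =>
      simp only [restrict, leafList, List.filter_append]
      rcases h1 : restrict P l with _ | l' <;> rcases h2 : restrict P r with _ | r' <;>
        simp_all [oLeafList, leafList]

lemma leaves_node (l r : HCTree V) : leaves (node l r) = leaves l ∪ leaves r := by
  simp [leaves, leafList]

lemma leaves_nonempty (t : HCTree V) : t.leaves.Nonempty := by
  induction t with
  | leaf v => exact ⟨v, by simp [leaves, leafList]⟩
  | node l r ihl ihr =>
      rw [leaves_node]
      exact ihl.mono Finset.subset_union_left

lemma cut_nonneg {w : V → V → ℝ} (hw : ∀ u v, 0 ≤ w u v) (S T : Finset V) :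
    0 ≤ cut w S T :=
  Finset.sum_nonneg fun u _ => Finset.sum_nonneg fun v _ => hw u v

lemma inducedW_nonneg {w : V → V → ℝ} (hw : ∀ u v, 0 ≤ w u v) (P : Finset V) :
    ∀ u v, 0 ≤ inducedW w P u v := by
  intro u v; unfold inducedW; split <;> [exact hw u v; exact le_rfl]

lemma cost_nonneg {w : V → V → ℝ} (hw : ∀ u v, 0 ≤ w u v) (t : HCTree V) :
    0 ≤ cost w t := by
  induction t with
  | leaf v => simp [cost]
  | node l r ihl ihr =>
      unfold cost
      have := cut_nonneg hw (leaves l) (leaves r)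
      positivity

lemma cut_filter (w : V → V → ℝ) (P : Finset V) (S T : Finset V) :
    cut (inducedW w P) (S.filter (· ∈ P)) (T.filter (· ∈ P)) = cut (inducedW w P) S T := by
  unfold cut
  rw [Finset.sum_subset (Finset.filter_subset _ S)]
  · refine Finset.sum_congr rfl fun u hu => ?_
    rw [Finset.sum_subset (Finset.filter_subset _ T)]
    intro v hv hv'
    simp only [Finset.mem_filter, hv, true_and] at hv'
    simp [inducedW, hv']
  · intro u hu hu'
    simp only [Finset.mem_filter, hu, true_and] at hu'
    apply Finset.sum_eq_zero
    intro v _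
    simp [inducedW, hu']

lemma sum_cut_le (w : V → V → ℝ) (hw : ∀ u v, 0 ≤ w u v)
    {ℓ : ℕ} (P : Fin ℓ → Finset V) (hpart : ∀ v : V, ∃! i : Fin ℓ, v ∈ P i)
    (S T : Finset V) :
    ∑ i : Fin ℓ, cut (inducedW w (P i)) S T ≤ cut w S T := by
  unfold cut
  rw [Finset.sum_comm]
  refine Finset.sum_le_sum fun u _ => ?_
  rw [Finset.sum_comm]
  refine Finset.sum_le_sum fun v _ => ?_
  obtain ⟨i₀, hi₀, huniq⟩ := hpart u
  have hle : ∀ i : Fin ℓ, inducedW w (P i) u v ≤ if i = i₀ then w u v else 0 := by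
    intro i
    by_cases h : i = i₀
    · subst h; simp only [if_pos rfl]
      unfold inducedW; split <;> [exact le_rfl; exact hw u v]
    · simp only [if_neg h]
      unfold inducedW; split
      · exact absurd (huniq i (by tauto)) h
      · exact le_rfl
  calc ∑ i : Fin ℓ, inducedW w (P i) u v
      ≤ ∑ i : Fin ℓ, (if i = i₀ then w u v else 0) := Finset.sum_le_sum fun i _ => hle i
    _ = w u v := by simp

lemma restrict_cost_le (w : V → V → ℝ) (hw : ∀ u v, 0 ≤ w u v)
    {ℓ : ℕ} (P : Fin ℓ → Finset V) (hpart : ∀ v : V, ∃! i : Fin ℓ, v ∈ P i)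
    (t : HCTree V) :
    ∑ i : Fin ℓ, oCost (inducedW w (P i)) (restrict (P i) t) ≤ cost w t := by
  induction t with
  | leaf v =>
      have : ∀ i : Fin ℓ, oCost (inducedW w (P i)) (restrict (P i) (leaf v)) = 0 := by
        intro i
        simp only [restrict]
        split <;> simp [oCost, cost]
      simp [this, cost]
  | node l r ihl ihr =>
      have key : ∀ i : Fin ℓ, oCost (inducedW w (P i)) (restrict (P i) (node l r)) ≤
          ((leaves (node l r)).card : ℝ) * cut (inducedW w (P i)) (leaves l) (leaves r)
            + oCost (inducedW w (P i)) (restrict (P i) l)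
            + oCost (inducedW w (P i)) (restrict (P i) r) := by
        intro i
        have hwn := inducedW_nonneg hw (P i)
        have hln := restrict_leafList (P i) l
        have hrn := restrict_leafList (P i) r
        have hcutnn : 0 ≤ cut (inducedW w (P i)) (leaves l) (leaves r) :=
          cut_nonneg hwn _ _
        have hcn : (0:ℝ) ≤ ((leaves (node l r)).card : ℝ) := by positivity
        simp only [restrict]
        rcases h1 : restrict (P i) l with _ | l' <;> rcases h2 : restrict (P i) r with _ | r'
        · simp only [oCost]
          positivity
        · -- l empty, r nonempty: cut with leaves l inside P i is 0
          rw [h1] at hln; rw [h2] at hrn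
          simp only [oCost]
          have : cost (inducedW w (P i)) r' ≤ cost (inducedW w (P i)) r' := le_refl _
          nlinarith [mul_nonneg hcn hcutnn, cost_nonneg hwn r']
        · rw [h1] at hln; rw [h2] at hrn
          simp only [oCost]
          nlinarith [mul_nonneg hcn hcutnn, cost_nonneg hwn l']
        · rw [h1] at hln; rw [h2] at hrn
          simp only [oLeafList] at hln hrn
          simp only [oCost, cost]
          have hl' : leaves l' = (leaves l).filter (· ∈ P i) := by
            simp only [leaves, hln, List.toFinset_filter]; simp
          have hr' : leaves r' = (leaves r).filter (· ∈ P i) := by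
            simp only [leaves, hrn, List.toFinset_filter]; simp
          have hcut : cut (inducedW w (P i)) (leaves l') (leaves r') =
              cut (inducedW w (P i)) (leaves l) (leaves r) := by
            rw [hl', hr', cut_filter]
          have hcard : ((leaves (node l' r')).card : ℝ) ≤ ((leaves (node l r)).card : ℝ) := by
            have hsub : leaves (node l' r') ⊆ leaves (node l r) := by
              rw [leaves_node, leaves_node, hl', hr']
              exact Finset.union_subset_union (Finset.filter_subset _ _)
                (Finset.filter_subset _ _)
            exact_mod_cast Finset.card_le_card hsub
          rw [hcut]
          have := mul_le_mul_of_nonneg_right hcard hcutnn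
          linarith
      calc ∑ i : Fin ℓ, oCost (inducedW w (P i)) (restrict (P i) (node l r))
          ≤ ∑ i : Fin ℓ, (((leaves (node l r)).card : ℝ) *
              cut (inducedW w (P i)) (leaves l) (leaves r)
              + oCost (inducedW w (P i)) (restrict (P i) l)
              + oCost (inducedW w (P i)) (restrict (P i) r)) :=
            Finset.sum_le_sum fun i _ => key i
        _ ≤ cost w (node l r) := by
            rw [Finset.sum_add_distrib, Finset.sum_add_distrib, ← Finset.mul_sum]
            unfold cost
            have h1 := sum_cut_le w hw P hpart (leaves l) (leaves r)
            have h2 : (0:ℝ) ≤ ((leaves (node l r)).card : ℝ) := by positivity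
            nlinarith [ihl, ihr, mul_le_mul_of_nonneg_left h1 h2]

end HCTree

open HCTree in
/-- For any graph `G`, any optimal HC tree `T*` of `G` and any partition
`{P_i}_{i=1}^ℓ` of the vertex set, `OPT_G ≥ ∑_{i=1}^{ℓ} OPT_{G[P_i]}`: if `T_i` is an
optimal HC tree of the induced subgraph `G[P_i]` for each `i`, then
`∑_i cost_{G[P_i]}(T_i) ≤ cost_G(T*)`. -/
theorem sum_opt_induced_le_opt {V : Type} [Fintype V] [DecidableEq V]
    (w : V → V → ℝ) (hw : ∀ u v, 0 ≤ w u v) (hsymm : ∀ u v, w u v = w v u)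
    (ℓ : ℕ) (P : Fin ℓ → Finset V)
    (hpart : ∀ v : V, ∃! i : Fin ℓ, v ∈ P i)
    (Tstar : HCTree V) (hTstar : isHC Tstar)
    (hopt : ∀ t : HCTree V, isHC t → cost w Tstar ≤ cost w t)
    (T : Fin ℓ → HCTree V) (hT : ∀ i, isHCon (T i) (P i))
    (hToptimal : ∀ i, ∀ t : HCTree V, isHCon t (P i) →
      cost (inducedW w (P i)) (T i) ≤ cost (inducedW w (P i)) t) :
    ∑ i : Fin ℓ, cost (inducedW w (P i)) (T i) ≤ cost w Tstar := by
  have hmain := restrict_cost_le w hw P hpart Tstar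
  refine le_trans (Finset.sum_le_sum fun i _ => ?_) hmain
  -- show cost of T i ≤ cost of the restriction of Tstar to P i
  have hfil : oLeafList (restrict (P i) Tstar) = Tstar.leafList.filter (· ∈ P i) :=
    restrict_leafList (P i) Tstar
  rcases hres : restrict (P i) Tstar with _ | t
  · -- impossible: P i is nonempty
    exfalso
    rw [hres] at hfil
    have hPne : (P i).Nonempty := by
      rcases (hT i).2 ▸ (leaves_nonempty (T i)) with ⟨v, hv⟩
      exact ⟨v, hv⟩
    obtain ⟨v, hv⟩ := hPne
    have hvmem : v ∈ Tstar.leafList := by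
      have : v ∈ Tstar.leaves := hTstar.2 ▸ Finset.mem_univ v
      simpa [leaves] using this
    have : v ∈ List.filter (· ∈ P i) Tstar.leafList := by
      simp [List.mem_filter, hvmem, hv]
    rw [← hfil] at this
    simp [oLeafList] at this
  · rw [hres] at hfil
    simp only [oLeafList] at hfil
    have hHC : isHCon t (P i) := by
      constructor
      · rw [hfil]; exact hTstar.1.filter _
      · rw [leaves, hfil, List.toFinset_filter]
        have : Tstar.leafList.toFinset = Finset.univ := hTstar.2
        rw [this]
        ext x; simp
    have := hToptimal i t hHC
    simpa [oCost] using this
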